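/- Let Z be a square-integrable real random variable, 𝒢 a sub-σ-algebra, and W a d-dimensional random vector with E[W | 𝒢] = 0 and E[‖W‖² | 𝒢] = d·Δt for a constant Δt > 0. Define z = (1/Δt) E[Z·W | 𝒢] ∈ ℝ^d componentwise. Then Δt · E[‖z‖²] ≤ d · E[Z²]. -/

import Mathlib

open MeasureTheory

lemma integrable_mul_of_memLp_two {Ω : Type*} {mΩ : MeasurableSpace Ω} {μ : Measure Ω}
    (X Y : Ω → ℝ) (hX : MemLp X 2 μ) (hY : MemLp Y 2 μ) :
    Integrable (fun ω => X ω * Y ω) μ := by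
  have h : MemLp (X • Y) 1 μ := hY.smul hX (hpqr := ⟨by simp only [one_div, inv_one]; rw [ENNReal.inv_two_add_inv_two]⟩)
  rw [memLp_one_iff_integrable] at h
  simpa [Pi.smul_apply, smul_eq_mul, Pi.mul_def] using h

/-- Conditional Cauchy–Schwarz. -/
lemma condexp_cauchy_schwarz {Ω : Type*} {mΩ : MeasurableSpace Ω} {μ : Measure Ω}
    [IsProbabilityMeasure μ] (m : MeasurableSpace Ω) (hm : m ≤ mΩ)
    (X Y : Ω → ℝ) (hX : MemLp X 2 μ) (hY : MemLp Y 2 μ) :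
    ∀ᵐ ω ∂μ, (μ[fun ω => X ω * Y ω | m]) ω ^ 2 ≤
      (μ[fun ω => X ω ^ 2 | m]) ω * (μ[fun ω => Y ω ^ 2 | m]) ω := by
  have hX2 : Integrable (fun ω => X ω ^ 2) μ := hX.integrable_sq
  have hY2 : Integrable (fun ω => Y ω ^ 2) μ := hY.integrable_sq
  have hXY : Integrable (fun ω => X ω * Y ω) μ := integrable_mul_of_memLp_two X Y hX hY
  -- For each rational q, a.e. nonnegativity of the quadratic form
  have key : ∀ q : ℚ, ∀ᵐ ω ∂μ,
      0 ≤ (q : ℝ)^2 * (μ[fun ω => X ω ^ 2 | m]) ω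
        + (2 * q) * (μ[fun ω => X ω * Y ω | m]) ω + (μ[fun ω => Y ω ^ 2 | m]) ω := by
    intro q
    have hnn : 0 ≤ᵐ[μ] μ[fun ω => ((q:ℝ) * X ω + Y ω) ^ 2 | m] :=
      condExp_nonneg (Filter.Eventually.of_forall fun ω => sq_nonneg _)
    have heq1 : (fun ω => ((q:ℝ) * X ω + Y ω) ^ 2)
        = fun ω => ((q:ℝ)^2 * X ω ^ 2 + (2 * q) * (X ω * Y ω)) + Y ω ^ 2 := by
      funext ω; ring
    have h1 : Integrable (fun ω => (q:ℝ)^2 * X ω ^ 2) μ := hX2.const_mul _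
    have h2 : Integrable (fun ω => (2 * (q:ℝ)) * (X ω * Y ω)) μ := hXY.const_mul _
    have hadd : μ[fun ω => ((q:ℝ)^2 * X ω ^ 2 + (2 * q) * (X ω * Y ω)) + Y ω ^ 2 | m]
        =ᵐ[μ] μ[fun ω => (q:ℝ)^2 * X ω ^ 2 + (2 * q) * (X ω * Y ω) | m]
          + μ[fun ω => Y ω ^ 2 | m] := condExp_add (h1.add h2) hY2 m
    have hadd2 : μ[fun ω => (q:ℝ)^2 * X ω ^ 2 + (2 * q) * (X ω * Y ω) | m]
        =ᵐ[μ] μ[fun ω => (q:ℝ)^2 * X ω ^ 2 | m]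
          + μ[fun ω => (2 * (q:ℝ)) * (X ω * Y ω) | m] := condExp_add h1 h2 m
    have hs1 : μ[fun ω => (q:ℝ)^2 * X ω ^ 2 | m]
        =ᵐ[μ] fun ω => (q:ℝ)^2 * (μ[fun ω => X ω ^ 2 | m]) ω := by
      have := condExp_smul (μ := μ) (m := m) ((q:ℝ)^2) (fun ω => X ω ^ 2)
      simpa [Pi.smul_apply, smul_eq_mul, Pi.smul_def] using this
    have hs2 : μ[fun ω => (2 * (q:ℝ)) * (X ω * Y ω) | m]
        =ᵐ[μ] fun ω => (2 * (q:ℝ)) * (μ[fun ω => X ω * Y ω | m]) ω := by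
      have := condExp_smul (μ := μ) (m := m) (2 * (q:ℝ)) (fun ω => X ω * Y ω)
      simpa [Pi.smul_apply, smul_eq_mul, Pi.smul_def] using this
    have hcongr : μ[fun ω => ((q:ℝ) * X ω + Y ω) ^ 2 | m]
        =ᵐ[μ] μ[fun ω => ((q:ℝ)^2 * X ω ^ 2 + (2 * q) * (X ω * Y ω)) + Y ω ^ 2 | m] := by
      rw [← heq1]
    filter_upwards [hnn, hcongr, hadd, hadd2, hs1, hs2] with ω h0 hc ha ha2 e1 e2
    have : (0:ℝ) ≤ (μ[fun ω => ((q:ℝ) * X ω + Y ω) ^ 2 | m]) ω := h0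
    rw [hc, ha] at this
    simp only [Pi.add_apply] at this ha2
    rw [ha2, e1, e2] at this
    linarith
  have hall : ∀ᵐ ω ∂μ, ∀ q : ℚ,
      0 ≤ (q : ℝ)^2 * (μ[fun ω => X ω ^ 2 | m]) ω
        + (2 * q) * (μ[fun ω => X ω * Y ω | m]) ω + (μ[fun ω => Y ω ^ 2 | m]) ω :=
    (ae_all_iff).2 key
  filter_upwards [hall] with ω hω
  set a := (μ[fun ω => X ω ^ 2 | m]) ω
  set b := (μ[fun ω => X ω * Y ω | m]) ω
  set c := (μ[fun ω => Y ω ^ 2 | m]) ω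
  -- extend nonnegativity from ℚ to ℝ by density/continuity
  have hreal : ∀ t : ℝ, 0 ≤ a * (t * t) + (2 * b) * t + c := by
    intro t
    have hclosed : IsClosed {t : ℝ | 0 ≤ a * (t * t) + (2 * b) * t + c} :=
      isClosed_le continuous_const (by continuity)
    have hsub : Set.range ((↑) : ℚ → ℝ) ⊆ {t : ℝ | 0 ≤ a * (t * t) + (2 * b) * t + c} := by
      rintro _ ⟨q, rfl⟩
      have := hω q
      simp only [Set.mem_setOf_eq]
      nlinarith [hω q]
    have hdense : Dense (Set.range ((↑) : ℚ → ℝ)) := Rat.denseRange_cast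
    have : closure (Set.range ((↑) : ℚ → ℝ)) ⊆ {t : ℝ | 0 ≤ a * (t * t) + (2 * b) * t + c} :=
      hclosed.closure_subset_iff.2 hsub
    exact this (by rw [hdense.closure_eq]; trivial)
  have hdisc : discrim a (2 * b) c ≤ 0 := discrim_le_zero hreal
  rw [discrim] at hdisc
  nlinarith [hdisc]

theorem gradient_coefficient_error_bound
    {Ω : Type*} {mΩ : MeasurableSpace Ω} {μ : Measure Ω} [IsProbabilityMeasure μ]
    (m : MeasurableSpace Ω) (hm : m ≤ mΩ) (d : ℕ)
    (Z : Ω → ℝ) (hZ : MemLp Z 2 μ)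
    (W : Ω → Fin d → ℝ) (hW : ∀ i, MemLp (fun ω => W ω i) 2 μ)
    (Δt : ℝ) (hΔt : 0 < Δt)
    (hW0 : ∀ i, μ[fun ω => W ω i | m] =ᵐ[μ] 0)
    (hW2 : μ[fun ω => ∑ i, W ω i ^ 2 | m] =ᵐ[μ] fun _ => (d : ℝ) * Δt)
    (z : Ω → Fin d → ℝ)
    (hz : z = fun ω i => (1 / Δt) * (μ[fun ω => Z ω * W ω i | m]) ω) :
    Δt * ∫ ω, ∑ i, z ω i ^ 2 ∂μ ≤ (d : ℝ) * ∫ ω, Z ω ^ 2 ∂μ := by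
  have hZ2 : Integrable (fun ω => Z ω ^ 2) μ := hZ.integrable_sq
  set A : Ω → ℝ := μ[fun ω => Z ω ^ 2 | m] with hA
  set b : Fin d → Ω → ℝ := fun i => μ[fun ω => Z ω * W ω i | m] with hb
  -- Cauchy-Schwarz for each coordinate
  have hCS : ∀ i : Fin d, ∀ᵐ ω ∂μ,
      b i ω ^ 2 ≤ A ω * (μ[fun ω => W ω i ^ 2 | m]) ω :=
    fun i => condexp_cauchy_schwarz m hm Z (fun ω => W ω i) hZ (hW i)
  -- sum of conditional expectations of W i ^ 2
  have hsum : μ[fun ω => ∑ i, W ω i ^ 2 | m]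
      =ᵐ[μ] ∑ i, μ[fun ω => W ω i ^ 2 | m] := by
    have h := condExp_finsetSum (μ := μ) (m := m) (s := Finset.univ)
      (f := fun i ω => W ω i ^ 2) (fun i _ => (hW i).integrable_sq)
    have he : (fun ω => ∑ i, W ω i ^ 2) = ∑ i : Fin d, fun ω => W ω i ^ 2 := by
      funext ω; simp
    rw [he]; exact h
  -- a.e. bound: ∑ b i ^2 ≤ A * (d * Δt)
  have hbound : ∀ᵐ ω ∂μ, ∑ i, b i ω ^ 2 ≤ A ω * ((d : ℝ) * Δt) := by
    have hCSall : ∀ᵐ ω ∂μ, ∀ i : Fin d,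
        b i ω ^ 2 ≤ A ω * (μ[fun ω => W ω i ^ 2 | m]) ω := (ae_all_iff).2 hCS
    filter_upwards [hCSall, hsum, hW2] with ω hcs hs h2
    calc ∑ i, b i ω ^ 2 ≤ ∑ i, A ω * (μ[fun ω => W ω i ^ 2 | m]) ω :=
          Finset.sum_le_sum fun i _ => hcs i
      _ = A ω * ∑ i, (μ[fun ω => W ω i ^ 2 | m]) ω := by rw [Finset.mul_sum]
      _ = A ω * (μ[fun ω => ∑ i, W ω i ^ 2 | m]) ω := by
          rw [hs]; simp
      _ = A ω * ((d : ℝ) * Δt) := by rw [h2]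
  -- integrate the bound
  have hgint : Integrable (fun ω => A ω * ((d : ℝ) * Δt)) μ :=
    integrable_condExp.mul_const _
  have hint : ∫ ω, ∑ i, b i ω ^ 2 ∂μ ≤ ∫ ω, A ω * ((d : ℝ) * Δt) ∂μ :=
    integral_mono_of_nonneg
      (Filter.Eventually.of_forall fun ω =>
        Finset.sum_nonneg fun i _ => sq_nonneg _) hgint hbound
  have hAint : ∫ ω, A ω ∂μ = ∫ ω, Z ω ^ 2 ∂μ := integral_condExp hm
  have hR : ∫ ω, A ω * ((d : ℝ) * Δt) ∂μ = ((d : ℝ) * Δt) * ∫ ω, Z ω ^ 2 ∂μ := by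
    rw [integral_mul_const, hAint]; ring
  -- rewrite the left side
  have hL : ∫ ω, ∑ i, z ω i ^ 2 ∂μ = (1 / Δt)^2 * ∫ ω, ∑ i, b i ω ^ 2 ∂μ := by
    rw [← integral_const_mul]
    congr 1
    funext ω
    rw [hz, Finset.mul_sum]
    congr 1
    funext i
    rw [hb]
    ring
  rw [hL]
  have hS0 : 0 ≤ ∫ ω, ∑ i, b i ω ^ 2 ∂μ :=
    integral_nonneg fun ω => Finset.sum_nonneg fun i _ => sq_nonneg _
  have h1 : ∫ ω, ∑ i, b i ω ^ 2 ∂μ ≤ ((d : ℝ) * Δt) * ∫ ω, Z ω ^ 2 ∂μ := by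
    rw [← hR]; exact hint
  have hΔt2 : (0:ℝ) < Δt^2 := by positivity
  rw [div_pow, one_pow]
  rw [mul_comm Δt, mul_assoc, div_mul_eq_mul_div, one_mul]
  rw [div_le_iff₀ hΔt2] at *
  calc (∫ ω, ∑ i, b i ω ^ 2 ∂μ) * Δt ≤ (((d : ℝ) * Δt) * ∫ ω, Z ω ^ 2 ∂μ) * Δt := by
        apply mul_le_mul_of_nonneg_right h1 hΔt.le
    _ = ((d : ℝ) * ∫ ω, Z ω ^ 2 ∂μ) * Δt ^ 2 := by ring
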